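/- arXiv:1904.07729 — 4 statements merged into one kernel-verified Lean document; each statement's English description precedes it below -/
import Mathlib

section
/- The starting Latin square of order n=2t is a Latin square: every symbol in {1,...,2t} appears exactly once in each row and each column. -/
/-- The representative of `x` modulo `t` in `{1, ..., t}`. -/
def rmod (t : ℕ) (x : ℤ) : ℤ := (x - 1) % t + 1

/-- The starting Latin square of order `2*t`. -/
def SLS (t : ℕ) (i j : ℤ) : ℤ :=
  if i ≤ t ∧ j ≤ t then rmod t (j - i + 1)
  else if t < i ∧ t < j then rmod t (i - j + 1)
  else if i ≤ t then rmod t (j - i + 1) + t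
  else rmod t (i - j + 1) + t

lemma rmod_bounds (t : ℕ) (ht : 1 ≤ t) (x : ℤ) : 1 ≤ rmod t x ∧ rmod t x ≤ t := by
  unfold rmod
  have h0 : (0:ℤ) < t := by exact_mod_cast ht
  have h1 := Int.emod_nonneg (x-1) (by positivity : (t:ℤ) ≠ 0)
  have h2 := Int.emod_lt_of_pos (x-1) h0
  omega

lemma rmod_dvd (t : ℕ) (x : ℤ) : (t:ℤ) ∣ (x - rmod t x) :=
  ⟨(x-1)/t, by unfold rmod; rw [Int.emod_def]; ring⟩

lemma eq_of_dvd_small (t : ℕ) (ht : 1 ≤ t) (a b : ℤ) (h : (t:ℤ) ∣ a - b)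
    (h1 : -(t:ℤ) < a - b) (h2 : a - b < t) : a = b := by
  obtain ⟨k, hk⟩ := h
  have h0 : (0:ℤ) < t := by exact_mod_cast ht
  have hk1 : k < 1 := by
    have : (t:ℤ) * k < t * 1 := by rw [mul_one]; omega
    exact lt_of_mul_lt_mul_left this (le_of_lt h0)
  have hk2 : -1 < k := by
    have : (t:ℤ) * (-1) < t * k := by omega
    exact lt_of_mul_lt_mul_left this (le_of_lt h0)
  have : k = 0 := by omega
  rw [this] at hk
  omega

lemma rmod_eq_iff (t : ℕ) (ht : 1 ≤ t) (y s : ℤ) (hs1 : 1 ≤ s) (hs2 : s ≤ t) :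
    rmod t y = s ↔ (t:ℤ) ∣ (y - s) := by
  constructor
  · intro h
    have := rmod_dvd t y
    rw [h] at this; exact this
  · rintro ⟨k, hk⟩
    obtain ⟨m, hm⟩ := rmod_dvd t y
    have hb := rmod_bounds t ht y
    refine eq_of_dvd_small t ht _ _ ⟨k - m, ?_⟩ (by omega) (by omega)
    have : rmod t y - s = (y - s) - (y - rmod t y) := by ring
    rw [this, hk, hm]; ring

lemma key (t : ℕ) (ht : 1 ≤ t) (ε c s m : ℤ) (hε : ε * ε = 1)
    (hs1 : 1 ≤ s) (hs2 : s ≤ (t:ℤ)) :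
    ∃! x, (m + 1 ≤ x ∧ x ≤ m + t) ∧ rmod t (ε * x + c) = s := by
  have hb := rmod_bounds t ht (ε*(s-c) - m)
  obtain ⟨k, hk⟩ := rmod_dvd t (ε*(s-c) - m)
  refine ⟨rmod t (ε*(s-c) - m) + m, ⟨⟨by omega, by omega⟩, ?_⟩, ?_⟩
  · rw [rmod_eq_iff t ht _ s hs1 hs2]
    refine ⟨-(ε*k), ?_⟩
    have hR : rmod t (ε*(s-c) - m) = ε*(s-c) - m - t*k := by omega
    rw [hR]
    linear_combination (s - c) * hε
  · rintro y ⟨⟨hy1, hy2⟩, hy3⟩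
    rw [rmod_eq_iff t ht _ s hs1 hs2] at hy3
    obtain ⟨k', hk'⟩ := hy3
    -- ε*y + c - s = t*k'  and  (ε*(s-c)-m) - rmod = t*k
    -- y - (rmod + m) = y - ε*(s-c) + t*k = ε*(ε*y - (s - c)) + t*k = ε*(t*k') + t*k
    refine eq_of_dvd_small t ht _ _ ⟨ε*k' + k, ?_⟩ (by omega) (by omega)
    have hR : rmod t (ε*(s-c) - m) = ε*(s-c) - m - t*k := by omega
    rw [hR]
    linear_combination ε * hk' - y * hε

lemma master (t : ℕ) (ht : 1 ≤ t) (ε₁ c₁ ε₂ c₂ a s : ℤ)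
    (hε₁ : ε₁ * ε₁ = 1) (hε₂ : ε₂ * ε₂ = 1) (ha : a = 0 ∨ a = (t:ℤ))
    (hs1 : 1 ≤ s) (hs2 : s ≤ 2*(t:ℤ)) (F : ℤ → ℤ)
    (hlow : ∀ j, 1 ≤ j → j ≤ (t:ℤ) → F j = rmod t (ε₁*j + c₁) + a)
    (hhigh : ∀ j, (t:ℤ) < j → j ≤ 2*t → F j = rmod t (ε₂*j + c₂) + ((t:ℤ) - a)) :
    ∃! j, j ∈ Finset.Icc (1:ℤ) (2*t) ∧ F j = s := by
  have htZ : (1:ℤ) ≤ t := by exact_mod_cast ht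
  by_cases hsa : a < s ∧ s ≤ a + t
  · obtain ⟨x, ⟨⟨hx1, hx2⟩, hx3⟩, hxu⟩ :=
      key t ht ε₁ c₁ (s - a) 0 hε₁ (by omega) (by omega)
    refine ⟨x, ⟨Finset.mem_Icc.mpr ⟨by omega, by omega⟩, ?_⟩, ?_⟩
    · rw [hlow x (by omega) (by omega), hx3]; ring
    · rintro y ⟨hy, hyF⟩
      rw [Finset.mem_Icc] at hy
      have hyt : y ≤ (t:ℤ) := by
        by_contra hyt'
        rw [hhigh y (by omega) (by omega)] at hyF
        have := rmod_bounds t ht (ε₂*y + c₂)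
        omega
      refine hxu y ⟨⟨by omega, by omega⟩, ?_⟩
      rw [hlow y (by omega) hyt] at hyF
      omega
  · have hsb : (t:ℤ) - a < s ∧ s ≤ 2*t - a := by omega
    obtain ⟨x, ⟨⟨hx1, hx2⟩, hx3⟩, hxu⟩ :=
      key t ht ε₂ c₂ (s - ((t:ℤ) - a)) t hε₂ (by omega) (by omega)
    refine ⟨x, ⟨Finset.mem_Icc.mpr ⟨by omega, by omega⟩, ?_⟩, ?_⟩
    · rw [hhigh x (by omega) (by omega), hx3]; ring
    · rintro y ⟨hy, hyF⟩
      rw [Finset.mem_Icc] at hy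
      have hyt : (t:ℤ) < y := by
        by_contra hyt'
        rw [hlow y (by omega) (by omega)] at hyF
        have := rmod_bounds t ht (ε₁*y + c₁)
        omega
      refine hxu y ⟨⟨by omega, by omega⟩, ?_⟩
      rw [hhigh y hyt (by omega)] at hyF
      omega

/-- The starting Latin square of order `n = 2t` is a Latin square: every symbol in
`{1,...,2t}` appears exactly once in each row and exactly once in each column. -/
theorem starting_latin_square_is_latin (t : ℕ) (ht : 1 ≤ t) :
    (∀ i ∈ Finset.Icc (1:ℤ) (2*t), ∀ s ∈ Finset.Icc (1:ℤ) (2*t),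
      ∃! j, j ∈ Finset.Icc (1:ℤ) (2*t) ∧ SLS t i j = s) ∧
    (∀ j ∈ Finset.Icc (1:ℤ) (2*t), ∀ s ∈ Finset.Icc (1:ℤ) (2*t),
      ∃! i, i ∈ Finset.Icc (1:ℤ) (2*t) ∧ SLS t i j = s) := by
  constructor
  · intro i hi s hs
    rw [Finset.mem_Icc] at hi hs
    by_cases hit : i ≤ (t:ℤ)
    · refine master t ht 1 (1 - i) 1 (1 - i) 0 s (by ring) (by ring) (Or.inl rfl)
        hs.1 hs.2 (fun j => SLS t i j) ?_ ?_
      · intro j hj1 hj2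
        simp only [SLS]
        rw [if_pos ⟨hit, hj2⟩]
        have : j - i + 1 = 1*j + (1 - i) := by ring
        rw [this]; ring
      · intro j hj1 hj2
        simp only [SLS]
        rw [if_neg (by omega), if_neg (by omega), if_pos hit]
        have : j - i + 1 = 1*j + (1 - i) := by ring
        rw [this]; ring
    · refine master t ht (-1) (i + 1) (-1) (i + 1) t s (by ring) (by ring) (Or.inr rfl)
        hs.1 hs.2 (fun j => SLS t i j) ?_ ?_
      · intro j hj1 hj2
        simp only [SLS]
        rw [if_neg (by omega), if_neg (by omega), if_neg hit]
        have : i - j + 1 = (-1)*j + (i + 1) := by ring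
        rw [this]
      · intro j hj1 hj2
        simp only [SLS]
        rw [if_neg (by omega), if_pos ⟨by omega, hj1⟩]
        have : i - j + 1 = (-1)*j + (i + 1) := by ring
        rw [this]; ring
  · intro j hj s hs
    rw [Finset.mem_Icc] at hj hs
    by_cases hjt : j ≤ (t:ℤ)
    · refine master t ht (-1) (j + 1) 1 (1 - j) 0 s (by ring) (by ring) (Or.inl rfl)
        hs.1 hs.2 (fun i => SLS t i j) ?_ ?_
      · intro i hi1 hi2
        simp only [SLS]
        rw [if_pos ⟨hi2, hjt⟩]
        have : j - i + 1 = (-1)*i + (j + 1) := by ring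
        rw [this]; ring
      · intro i hi1 hi2
        simp only [SLS]
        rw [if_neg (by omega), if_neg (by omega), if_neg (by omega)]
        have : i - j + 1 = 1*i + (1 - j) := by ring
        rw [this]; ring
    · refine master t ht (-1) (j + 1) 1 (1 - j) t s (by ring) (by ring) (Or.inr rfl)
        hs.1 hs.2 (fun i => SLS t i j) ?_ ?_
      · intro i hi1 hi2
        simp only [SLS]
        rw [if_neg (by omega), if_neg (by omega), if_pos hi2]
        have : j - i + 1 = (-1)*i + (j + 1) := by ring
        rw [this]
      · intro i hi1 hi2
        simp only [SLS]
        rw [if_neg (by omega), if_pos ⟨by omega, by omega⟩]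
        have : i - j + 1 = 1*i + (1 - j) := by ring
        rw [this]; ring
end

section
/- In the starting Latin square of order 2t, any two cells in the same row lying in adjacent quadrants (one with column index ≤ t, the other with column index > t, or analogously for row index) determine a unique intercalate containing both cells. -/
variable {t : ℕ}

lemma rmod_ge (ht : 1 ≤ t) (x : ℤ) : 1 ≤ rmod t x := by
  have h : (0:ℤ) ≤ (x-1) % t := Int.emod_nonneg _ (by exact_mod_cast Nat.one_le_iff_ne_zero.mp ht)
  unfold rmod; linarith

lemma rmod_le (ht : 1 ≤ t) (x : ℤ) : rmod t x ≤ t := by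
  have h : (x-1) % t < t := Int.emod_lt_of_pos _ (by exact_mod_cast ht)
  unfold rmod; linarith

lemma rmod_sub (t : ℕ) (x : ℤ) : (rmod t x - x) % t = 0 := by
  unfold rmod
  have : (x - 1) % ↑t + 1 - x = (x-1) % t - (x - 1) := by ring
  rw [this, Int.sub_emod, Int.emod_emod_of_dvd _ dvd_rfl, sub_self, Int.zero_emod]

lemma emod_sub_zero {a b n : ℤ} (ha : a % n = 0) (hb : b % n = 0) : (a - b) % n = 0 := by
  rw [Int.sub_emod, ha, hb]; simp

lemma emod_neg_zero {a n : ℤ} (ha : a % n = 0) : (-a) % n = 0 := by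
  rw [show -a = 0 - a by ring]; exact emod_sub_zero (by simp) ha

lemma window (ht : 1 ≤ t) {a : ℤ} (h0 : a % t = 0) (h1 : -(t:ℤ) < a) (h2 : a < t) : a = 0 := by
  obtain ⟨k, hk⟩ := Int.dvd_of_emod_eq_zero h0
  have htp : (0:ℤ) < t := by exact_mod_cast ht
  have hk1 : k < 1 := by by_contra h; push_neg at h; nlinarith
  have hk2 : -1 < k := by by_contra h; push_neg at h; nlinarith
  have : k = 0 := by omega
  rw [hk, this, mul_zero]

lemma near (ht : 1 ≤ t) {a b : ℤ} (h : (a-b) % t = 0) (h1 : -(t:ℤ) < a - b) (h2 : a - b < t) :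
    a = b := by
  have := window ht h h1 h2; omega

lemma rmod_congr (ht : 1 ≤ t) {x y : ℤ} (h : (x - y) % (t:ℤ) = 0) : rmod t x = rmod t y := by
  apply near ht
  · have e : rmod t x - rmod t y = (rmod t x - x) - (rmod t y - y) + (x - y) := by ring
    rw [e, Int.add_emod, emod_sub_zero (rmod_sub t x) (rmod_sub t y), h]; simp
  · have := rmod_ge ht x; have := rmod_le ht y; linarith
  · have := rmod_le ht x; have := rmod_ge ht y; linarith

lemma rmod_inj (ht : 1 ≤ t) {x y : ℤ} (h : rmod t x = rmod t y) : (x - y) % (t:ℤ) = 0 := by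
  have e : x - y = (rmod t y - y) - (rmod t x - x) := by rw [h]; ring
  rw [e]; exact emod_sub_zero (rmod_sub t y) (rmod_sub t x)

lemma SLS_tl {i j : ℤ} (h1 : i ≤ t) (h2 : j ≤ t) : SLS t i j = rmod t (j-i+1) := by
  unfold SLS; rw [if_pos ⟨h1, h2⟩]

lemma SLS_br {i j : ℤ} (h1 : (t:ℤ) < i) (h2 : (t:ℤ) < j) : SLS t i j = rmod t (i-j+1) := by
  unfold SLS; rw [if_neg (by omega), if_pos ⟨h1, h2⟩]

lemma SLS_tr {i j : ℤ} (h1 : i ≤ t) (h2 : (t:ℤ) < j) : SLS t i j = rmod t (j-i+1) + t := by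
  unfold SLS; rw [if_neg (by omega), if_neg (by omega), if_pos h1]

lemma SLS_bl {i j : ℤ} (h1 : (t:ℤ) < i) (h2 : j ≤ t) : SLS t i j = rmod t (i-j+1) + t := by
  unfold SLS; rw [if_neg (by omega), if_neg (by omega), if_neg (by omega)]

lemma row_helper (t : ℕ) (ht : 1 ≤ t) (i j₁ j₂ : ℤ)
    (hi : i ∈ Finset.Icc (1:ℤ) (2*t)) (hj1 : j₁ ∈ Finset.Icc (1:ℤ) (2*t))
    (hj2 : j₂ ∈ Finset.Icc (1:ℤ) (2*t)) (h1 : j₁ ≤ t) (h2 : (t:ℤ) < j₂) :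
    ∃! i₂, i₂ ∈ Finset.Icc (1:ℤ) (2*t) ∧ i₂ ≠ i ∧
      SLS t i₂ j₂ = SLS t i j₁ ∧ SLS t i₂ j₁ = SLS t i j₂ := by
  simp only [Finset.mem_Icc] at hi hj1 hj2 ⊢
  rcases le_or_gt i (t:ℤ) with hit | hit
  · -- candidate in bottom half
    set c : ℤ := rmod t (j₁ + j₂ - i) + t with hcdef
    have hb1 : 1 ≤ rmod t (j₁ + j₂ - i) := rmod_ge ht _
    have hb2 : rmod t (j₁ + j₂ - i) ≤ t := rmod_le ht _
    have hct : (t:ℤ) < c := by omega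
    have hc : (c - (j₁ + j₂ - i)) % t = 0 := by
      have e : c - (j₁ + j₂ - i) = (rmod t (j₁ + j₂ - i) - (j₁ + j₂ - i)) + (t:ℤ) * 1 := by
        rw [hcdef]; ring
      rw [e, Int.add_mul_emod_self_left]; exact rmod_sub t _
    refine ⟨c, ⟨⟨by omega, by omega⟩, by omega, ?_, ?_⟩, ?_⟩
    · rw [SLS_br hct h2, SLS_tl hit h1]
      apply rmod_congr ht
      have e : c - j₂ + 1 - (j₁ - i + 1) = c - (j₁ + j₂ - i) := by ring
      rw [e]; exact hc
    · rw [SLS_bl hct h1, SLS_tr hit h2]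
      have := rmod_congr ht (x := c - j₁ + 1) (y := j₂ - i + 1) (by
        have e : c - j₁ + 1 - (j₂ - i + 1) = c - (j₁ + j₂ - i) := by ring
        rw [e]; exact hc)
      omega
    · rintro y ⟨⟨hy1, hy2⟩, hyne, hA, hB⟩
      have hlt : SLS t i j₁ ≤ t := by rw [SLS_tl hit h1]; exact rmod_le ht _
      have hyt : (t:ℤ) < y := by
        by_contra h; push_neg at h
        rw [SLS_tr h h2] at hA
        have := rmod_ge ht (j₂ - y + 1); omega
      rw [SLS_br hyt h2, SLS_tl hit h1] at hA
      have hcong := rmod_inj ht hA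
      have hys : (y - (j₁ + j₂ - i)) % t = 0 := by
        have e : y - (j₁ + j₂ - i) = (y - j₂ + 1 - (j₁ - i + 1)) := by ring
        rw [e]; exact hcong
      refine near ht ?_ (by omega) (by omega)
      have e2 : y - c = (y - (j₁ + j₂ - i)) - (c - (j₁ + j₂ - i)) := by ring
      rw [e2]; exact emod_sub_zero hys hc
  · -- candidate in top half
    set c : ℤ := rmod t (j₁ + j₂ - i) with hcdef
    have hb1 : 1 ≤ c := rmod_ge ht _
    have hb2 : c ≤ t := rmod_le ht _
    have hc : (c - (j₁ + j₂ - i)) % t = 0 := rmod_sub t _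
    refine ⟨c, ⟨⟨by omega, by omega⟩, by omega, ?_, ?_⟩, ?_⟩
    · rw [SLS_tr hb2 h2, SLS_bl hit h1]
      have := rmod_congr ht (x := i - j₁ + 1) (y := j₂ - c + 1) (by
        have e : i - j₁ + 1 - (j₂ - c + 1) = c - (j₁ + j₂ - i) := by ring
        rw [e]; exact hc)
      omega
    · rw [SLS_tl hb2 h1, SLS_br hit h2]
      apply rmod_congr ht
      have e : j₁ - c + 1 - (i - j₂ + 1) = -(c - (j₁ + j₂ - i)) := by ring
      rw [e]; exact emod_neg_zero hc
    · rintro y ⟨⟨hy1, hy2⟩, hyne, hA, hB⟩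
      have hgt : (t:ℤ) < SLS t i j₁ := by
        rw [SLS_bl hit h1]; have := rmod_ge ht (i - j₁ + 1); omega
      have hyt : y ≤ (t:ℤ) := by
        by_contra h; push_neg at h
        rw [SLS_br h h2] at hA
        have := rmod_le ht (y - j₂ + 1); omega
      rw [SLS_tr hyt h2, SLS_bl hit h1] at hA
      have hA' : rmod t (j₂ - y + 1) = rmod t (i - j₁ + 1) := by omega
      have hcong := rmod_inj ht hA'
      have hys : (y - (j₁ + j₂ - i)) % t = 0 := by
        have e : y - (j₁ + j₂ - i) = -((j₂ - y + 1) - (i - j₁ + 1)) := by ring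
        rw [e]; exact emod_neg_zero hcong
      refine near ht ?_ (by omega) (by omega)
      have e2 : y - c = (y - (j₁ + j₂ - i)) - (c - (j₁ + j₂ - i)) := by ring
      rw [e2]; exact emod_sub_zero hys hc

lemma col_helper (t : ℕ) (ht : 1 ≤ t) (j i₁ i₂ : ℤ)
    (hj : j ∈ Finset.Icc (1:ℤ) (2*t)) (hi1 : i₁ ∈ Finset.Icc (1:ℤ) (2*t))
    (hi2 : i₂ ∈ Finset.Icc (1:ℤ) (2*t)) (h1 : i₁ ≤ t) (h2 : (t:ℤ) < i₂) :
    ∃! j₂, j₂ ∈ Finset.Icc (1:ℤ) (2*t) ∧ j₂ ≠ j ∧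
      SLS t i₂ j₂ = SLS t i₁ j ∧ SLS t i₁ j₂ = SLS t i₂ j := by
  simp only [Finset.mem_Icc] at hj hi1 hi2 ⊢
  rcases le_or_gt j (t:ℤ) with hjt | hjt
  · set c : ℤ := rmod t (i₁ + i₂ - j) + t with hcdef
    have hb1 : 1 ≤ rmod t (i₁ + i₂ - j) := rmod_ge ht _
    have hb2 : rmod t (i₁ + i₂ - j) ≤ t := rmod_le ht _
    have hct : (t:ℤ) < c := by omega
    have hc : (c - (i₁ + i₂ - j)) % t = 0 := by
      have e : c - (i₁ + i₂ - j) = (rmod t (i₁ + i₂ - j) - (i₁ + i₂ - j)) + (t:ℤ) * 1 := by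
        rw [hcdef]; ring
      rw [e, Int.add_mul_emod_self_left]; exact rmod_sub t _
    refine ⟨c, ⟨⟨by omega, by omega⟩, by omega, ?_, ?_⟩, ?_⟩
    · rw [SLS_br h2 hct, SLS_tl h1 hjt]
      apply rmod_congr ht
      have e : i₂ - c + 1 - (j - i₁ + 1) = -(c - (i₁ + i₂ - j)) := by ring
      rw [e]; exact emod_neg_zero hc
    · rw [SLS_tr h1 hct, SLS_bl h2 hjt]
      have := rmod_congr ht (x := c - i₁ + 1) (y := i₂ - j + 1) (by
        have e : c - i₁ + 1 - (i₂ - j + 1) = c - (i₁ + i₂ - j) := by ring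
        rw [e]; exact hc)
      omega
    · rintro y ⟨⟨hy1, hy2⟩, hyne, hA, hB⟩
      have hlt : SLS t i₁ j ≤ t := by rw [SLS_tl h1 hjt]; exact rmod_le ht _
      have hyt : (t:ℤ) < y := by
        by_contra h; push_neg at h
        rw [SLS_bl h2 h] at hA
        have := rmod_ge ht (i₂ - y + 1); omega
      rw [SLS_br h2 hyt, SLS_tl h1 hjt] at hA
      have hcong := rmod_inj ht hA
      have hys : (y - (i₁ + i₂ - j)) % t = 0 := by
        have e : y - (i₁ + i₂ - j) = -((i₂ - y + 1) - (j - i₁ + 1)) := by ring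
        rw [e]; exact emod_neg_zero hcong
      refine near ht ?_ (by omega) (by omega)
      have e2 : y - c = (y - (i₁ + i₂ - j)) - (c - (i₁ + i₂ - j)) := by ring
      rw [e2]; exact emod_sub_zero hys hc
  · set c : ℤ := rmod t (i₁ + i₂ - j) with hcdef
    have hb1 : 1 ≤ c := rmod_ge ht _
    have hb2 : c ≤ t := rmod_le ht _
    have hc : (c - (i₁ + i₂ - j)) % t = 0 := rmod_sub t _
    refine ⟨c, ⟨⟨by omega, by omega⟩, by omega, ?_, ?_⟩, ?_⟩
    · rw [SLS_bl h2 hb2, SLS_tr h1 hjt]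
      have := rmod_congr ht (x := i₂ - c + 1) (y := j - i₁ + 1) (by
        have e : i₂ - c + 1 - (j - i₁ + 1) = -(c - (i₁ + i₂ - j)) := by ring
        rw [e]; exact emod_neg_zero hc)
      omega
    · rw [SLS_tl h1 hb2, SLS_br h2 hjt]
      apply rmod_congr ht
      have e : c - i₁ + 1 - (i₂ - j + 1) = c - (i₁ + i₂ - j) := by ring
      rw [e]; exact hc
    · rintro y ⟨⟨hy1, hy2⟩, hyne, hA, hB⟩
      have hgt : (t:ℤ) < SLS t i₁ j := by
        rw [SLS_tr h1 hjt]; have := rmod_ge ht (j - i₁ + 1); omega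
      have hyt : y ≤ (t:ℤ) := by
        by_contra h; push_neg at h
        rw [SLS_br h2 h] at hA
        have := rmod_le ht (i₂ - y + 1); omega
      rw [SLS_bl h2 hyt, SLS_tr h1 hjt] at hA
      have hA' : rmod t (i₂ - y + 1) = rmod t (j - i₁ + 1) := by omega
      have hcong := rmod_inj ht hA'
      have hys : (y - (i₁ + i₂ - j)) % t = 0 := by
        have e : y - (i₁ + i₂ - j) = -((i₂ - y + 1) - (j - i₁ + 1)) := by ring
        rw [e]; exact emod_neg_zero hcong
      refine near ht ?_ (by omega) (by omega)
      have e2 : y - c = (y - (i₁ + i₂ - j)) - (c - (i₁ + i₂ - j)) := by ring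
      rw [e2]; exact emod_sub_zero hys hc

/-- In the starting Latin square of order `2t`, two cells in the same row lying in
adjacent quadrants (one column index `≤ t`, the other `> t`), and analogously two cells
in the same column lying in adjacent quadrants, determine a unique intercalate
containing both cells. -/
theorem starting_latin_square_adjacent_unique_intercalate (t : ℕ) (ht : 1 ≤ t) :
    (∀ i ∈ Finset.Icc (1:ℤ) (2*t), ∀ j₁ ∈ Finset.Icc (1:ℤ) (2*t),
      ∀ j₂ ∈ Finset.Icc (1:ℤ) (2*t),
      ((j₁ ≤ t ∧ (t:ℤ) < j₂) ∨ (j₂ ≤ t ∧ (t:ℤ) < j₁)) →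
      ∃! i₂, i₂ ∈ Finset.Icc (1:ℤ) (2*t) ∧ i₂ ≠ i ∧
        SLS t i₂ j₂ = SLS t i j₁ ∧ SLS t i₂ j₁ = SLS t i j₂) ∧
    (∀ j ∈ Finset.Icc (1:ℤ) (2*t), ∀ i₁ ∈ Finset.Icc (1:ℤ) (2*t),
      ∀ i₂ ∈ Finset.Icc (1:ℤ) (2*t),
      ((i₁ ≤ t ∧ (t:ℤ) < i₂) ∨ (i₂ ≤ t ∧ (t:ℤ) < i₁)) →
      ∃! j₂, j₂ ∈ Finset.Icc (1:ℤ) (2*t) ∧ j₂ ≠ j ∧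
        SLS t i₂ j₂ = SLS t i₁ j ∧ SLS t i₁ j₂ = SLS t i₂ j) := by
  constructor
  · intro i hi j₁ hj1 j₂ hj2 hadj
    rcases hadj with ⟨h1, h2⟩ | ⟨h1, h2⟩
    · exact row_helper t ht i j₁ j₂ hi hj1 hj2 h1 h2
    · obtain ⟨c, ⟨hm, hn, hA, hB⟩, hu⟩ := row_helper t ht i j₂ j₁ hi hj2 hj1 h1 h2
      exact ⟨c, ⟨hm, hn, hB, hA⟩, fun y ⟨a, b, d, e⟩ => hu y ⟨a, b, e, d⟩⟩
  · intro j hj i₁ hi1 i₂ hi2 hadj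
    rcases hadj with ⟨h1, h2⟩ | ⟨h1, h2⟩
    · exact col_helper t ht j i₁ i₂ hj hi1 hi2 h1 h2
    · obtain ⟨c, ⟨hm, hn, hA, hB⟩, hu⟩ := col_helper t ht j i₂ i₁ hj hi2 hi1 h1 h2
      exact ⟨c, ⟨hm, hn, hB, hA⟩, fun y ⟨a, b, d, e⟩ => hu y ⟨a, b, e, d⟩⟩
end

section
/- In any Latin cube, the intersection of two subcubes of order 2 is either empty, a single cell, or all eight cells (i.e., the subcubes coincide). -/
/-- `L` is a Latin cube of order `n`: every symbol occurs exactly once in each row,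
each column, and each file. -/
def IsLatinCube {n : ℕ} (L : Fin n → Fin n → Fin n → Fin n) : Prop :=
  (∀ i k, Function.Bijective (fun j => L i j k)) ∧
  (∀ j k, Function.Bijective (fun i => L i j k)) ∧
  (∀ i j, Function.Bijective (fun k => L i j k))

/-- `S` is a subcube of order 2 of the Latin cube `L`. -/
def IsSubcube {n : ℕ} (L : Fin n → Fin n → Fin n → Fin n)
    (S : Finset (Fin n × Fin n × Fin n)) : Prop :=
  ∃ i₁ i₂ j₁ j₂ k₁ k₂ : Fin n, i₁ ≠ i₂ ∧ j₁ ≠ j₂ ∧ k₁ ≠ k₂ ∧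
    L i₁ j₁ k₁ = L i₂ j₂ k₁ ∧ L i₁ j₁ k₁ = L i₁ j₂ k₂ ∧ L i₁ j₁ k₁ = L i₂ j₁ k₂ ∧
    L i₁ j₂ k₁ = L i₂ j₁ k₁ ∧ L i₁ j₂ k₁ = L i₁ j₁ k₂ ∧ L i₁ j₂ k₁ = L i₂ j₂ k₂ ∧
    S = {(i₁, j₁, k₁), (i₁, j₂, k₁), (i₂, j₁, k₁), (i₂, j₂, k₁),
         (i₁, j₁, k₂), (i₁, j₂, k₂), (i₂, j₁, k₂), (i₂, j₂, k₂)}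

private lemma perm2_of_mem {α : Type*} {a b x y : α} (hx : x = a ∨ x = b) (hy : y = a ∨ y = b)
    (hxy : x ≠ y) : (x = a ∧ y = b) ∨ (x = b ∧ y = a) := by
  rcases hx with rfl|rfl <;> rcases hy with rfl|rfl <;> tauto

private lemma other_of_mem {α : Type*} {a b x : α} (hx : x = a ∨ x = b) :
    ∃ y, (x = a ∧ y = b) ∨ (x = b ∧ y = a) := by
  rcases hx with rfl|rfl
  · exact ⟨b, Or.inl ⟨rfl, rfl⟩⟩
  · exact ⟨a, Or.inr ⟨rfl, rfl⟩⟩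

private lemma perm2_swap {α : Type*} {a b x y : α}
    (h : (x = a ∧ y = b) ∨ (x = b ∧ y = a)) : (y = a ∧ x = b) ∨ (y = b ∧ x = a) :=
  h.symm.imp And.symm And.symm

private lemma perm2_ne {α : Type*} {a b x y : α} (hab : a ≠ b)
    (h : (x = a ∧ y = b) ∨ (x = b ∧ y = a)) : x ≠ y := by
  rcases h with ⟨rfl, rfl⟩|⟨rfl, rfl⟩
  · exact hab
  · exact hab.symm

private lemma pair_eq_of_perm2 {α : Type*} [DecidableEq α] {a b x y : α}
    (h : (x = a ∧ y = b) ∨ (x = b ∧ y = a)) : ({a, b} : Finset α) = {x, y} := by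
  rcases h with ⟨rfl, rfl⟩|⟨rfl, rfl⟩
  · rfl
  · exact Finset.pair_comm _ _

section Flips

variable {n : ℕ} {L : Fin n → Fin n → Fin n → Fin n} {i₁ i₂ j₁ j₂ k₁ k₂ : Fin n}
variable (h1 : L i₁ j₁ k₁ = L i₂ j₂ k₁) (h2 : L i₁ j₁ k₁ = L i₁ j₂ k₂)
  (h3 : L i₁ j₁ k₁ = L i₂ j₁ k₂) (h4 : L i₁ j₂ k₁ = L i₂ j₁ k₁)
  (h5 : L i₁ j₂ k₁ = L i₁ j₁ k₂) (h6 : L i₁ j₂ k₁ = L i₂ j₂ k₂)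

include h1 h2 h3 h4 h5 h6

private lemma flipJK {x y z y' z' : Fin n} (hx : x = i₁ ∨ x = i₂)
    (hy : (y = j₁ ∧ y' = j₂) ∨ (y = j₂ ∧ y' = j₁))
    (hz : (z = k₁ ∧ z' = k₂) ∨ (z = k₂ ∧ z' = k₁)) :
    L x y z = L x y' z' := by
  rcases hx with rfl|rfl <;> rcases hy with ⟨rfl, rfl⟩|⟨rfl, rfl⟩ <;>
    rcases hz with ⟨rfl, rfl⟩|⟨rfl, rfl⟩ <;>
    first
      | exact h2 | exact h2.symm | exact h5 | exact h5.symm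
      | exact h1.symm.trans h3 | exact h3.symm.trans h1
      | exact h4.symm.trans h6 | exact h6.symm.trans h4

private lemma flipIK {x y z x' z' : Fin n}
    (hx : (x = i₁ ∧ x' = i₂) ∨ (x = i₂ ∧ x' = i₁))
    (hy : y = j₁ ∨ y = j₂)
    (hz : (z = k₁ ∧ z' = k₂) ∨ (z = k₂ ∧ z' = k₁)) :
    L x y z = L x' y z' := by
  rcases hx with ⟨rfl, rfl⟩|⟨rfl, rfl⟩ <;> rcases hy with rfl|rfl <;>
    rcases hz with ⟨rfl, rfl⟩|⟨rfl, rfl⟩ <;>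
    first
      | exact h3 | exact h3.symm | exact h6 | exact h6.symm
      | exact h5.symm.trans h4 | exact h4.symm.trans h5
      | exact h2.symm.trans h1 | exact h1.symm.trans h2

private lemma flipIJ {x y z x' y' : Fin n}
    (hx : (x = i₁ ∧ x' = i₂) ∨ (x = i₂ ∧ x' = i₁))
    (hy : (y = j₁ ∧ y' = j₂) ∨ (y = j₂ ∧ y' = j₁))
    (hz : z = k₁ ∨ z = k₂) :
    L x y z = L x' y' z := by
  rcases hx with ⟨rfl, rfl⟩|⟨rfl, rfl⟩ <;> rcases hy with ⟨rfl, rfl⟩|⟨rfl, rfl⟩ <;>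
    rcases hz with rfl|rfl <;>
    first
      | exact h1 | exact h1.symm | exact h4 | exact h4.symm
      | exact h5.symm.trans h6 | exact h6.symm.trans h5
      | exact h2.symm.trans h3 | exact h3.symm.trans h2

end Flips

private lemma coords_of_mem {n : ℕ} {a b c i₁ i₂ j₁ j₂ k₁ k₂ : Fin n}
    (h : a = i₁ ∧ b = j₁ ∧ c = k₁ ∨ a = i₁ ∧ b = j₂ ∧ c = k₁ ∨ a = i₂ ∧ b = j₁ ∧ c = k₁ ∨
      a = i₂ ∧ b = j₂ ∧ c = k₁ ∨ a = i₁ ∧ b = j₁ ∧ c = k₂ ∨ a = i₁ ∧ b = j₂ ∧ c = k₂ ∨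
      a = i₂ ∧ b = j₁ ∧ c = k₂ ∨ a = i₂ ∧ b = j₂ ∧ c = k₂) :
    (a = i₁ ∨ a = i₂) ∧ (b = j₁ ∨ b = j₂) ∧ (c = k₁ ∨ c = k₂) := by
  rcases h with ⟨ha,hb,hc⟩|⟨ha,hb,hc⟩|⟨ha,hb,hc⟩|⟨ha,hb,hc⟩|⟨ha,hb,hc⟩|⟨ha,hb,hc⟩|⟨ha,hb,hc⟩|⟨ha,hb,hc⟩ <;>
    exact ⟨by tauto, by tauto, by tauto⟩

private lemma subcube_as_product {n : ℕ} (i₁ i₂ j₁ j₂ k₁ k₂ : Fin n) :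
    ({(i₁, j₁, k₁), (i₁, j₂, k₁), (i₂, j₁, k₁), (i₂, j₂, k₁),
      (i₁, j₁, k₂), (i₁, j₂, k₂), (i₂, j₁, k₂), (i₂, j₂, k₂)} :
        Finset (Fin n × Fin n × Fin n)) =
      ({i₁, i₂} : Finset (Fin n)) ×ˢ (({j₁, j₂} : Finset (Fin n)) ×ˢ ({k₁, k₂} : Finset (Fin n))) := by
  ext ⟨x, y, z⟩
  simp only [Finset.mem_insert, Finset.mem_singleton, Finset.mem_product, Prod.mk.injEq]
  tauto

private lemma pairs_eq {n : ℕ} {L : Fin n → Fin n → Fin n → Fin n} (hL : IsLatinCube L)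
    {i₁ i₂ j₁ j₂ k₁ k₂ i₁' i₂' j₁' j₂' k₁' k₂' : Fin n}
    (h1 : L i₁ j₁ k₁ = L i₂ j₂ k₁) (h2 : L i₁ j₁ k₁ = L i₁ j₂ k₂)
    (h3 : L i₁ j₁ k₁ = L i₂ j₁ k₂) (h4 : L i₁ j₂ k₁ = L i₂ j₁ k₁)
    (h5 : L i₁ j₂ k₁ = L i₁ j₁ k₂) (h6 : L i₁ j₂ k₁ = L i₂ j₂ k₂)
    (h1' : L i₁' j₁' k₁' = L i₂' j₂' k₁') (h2' : L i₁' j₁' k₁' = L i₁' j₂' k₂')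
    (h3' : L i₁' j₁' k₁' = L i₂' j₁' k₂') (h4' : L i₁' j₂' k₁' = L i₂' j₁' k₁')
    (h5' : L i₁' j₂' k₁' = L i₁' j₁' k₂') (h6' : L i₁' j₂' k₁' = L i₂' j₂' k₂')
    {a b c a' b' c' : Fin n}
    (hpq : ¬(a = a' ∧ b = b' ∧ c = c'))
    (ha1 : a = i₁ ∨ a = i₂) (hb1 : b = j₁ ∨ b = j₂) (hc1 : c = k₁ ∨ c = k₂)
    (ha1' : a' = i₁ ∨ a' = i₂) (hb1' : b' = j₁ ∨ b' = j₂) (hc1' : c' = k₁ ∨ c' = k₂)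
    (ha2 : a = i₁' ∨ a = i₂') (hb2 : b = j₁' ∨ b = j₂') (hc2 : c = k₁' ∨ c = k₂')
    (ha2' : a' = i₁' ∨ a' = i₂') (hb2' : b' = j₁' ∨ b' = j₂') (hc2' : c' = k₁' ∨ c' = k₂') :
    ({i₁, i₂} : Finset (Fin n)) = {i₁', i₂'} ∧
    ({j₁, j₂} : Finset (Fin n)) = {j₁', j₂'} ∧
    ({k₁, k₂} : Finset (Fin n)) = {k₁', k₂'} := by
  refine ⟨?_, ?_, ?_⟩
  · by_cases haa : a = a'
    · obtain ⟨x, hx⟩ := other_of_mem ha1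
      obtain ⟨x', hx'⟩ := other_of_mem ha2
      have key : x = x' := by
        by_cases hbb : b = b'
        · have hcc : c ≠ c' := fun h => hpq ⟨haa, hbb, h⟩
          have e1 : L x b c = L a b c' :=
            flipIK h1 h2 h3 h4 h5 h6 (perm2_swap hx) hb1 (perm2_of_mem hc1 hc1' hcc)
          have e2 : L x' b c = L a b c' :=
            flipIK h1' h2' h3' h4' h5' h6' (perm2_swap hx') hb2 (perm2_of_mem hc2 hc2' hcc)
          exact (hL.2.1 b c).injective (e1.trans e2.symm)
        · have e1 : L x b c = L a b' c :=
            flipIJ h1 h2 h3 h4 h5 h6 (perm2_swap hx) (perm2_of_mem hb1 hb1' hbb) hc1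
          have e2 : L x' b c = L a b' c :=
            flipIJ h1' h2' h3' h4' h5' h6' (perm2_swap hx') (perm2_of_mem hb2 hb2' hbb) hc2
          exact (hL.2.1 b c).injective (e1.trans e2.symm)
      rw [pair_eq_of_perm2 hx, pair_eq_of_perm2 hx', key]
    · rw [pair_eq_of_perm2 (perm2_of_mem ha1 ha1' haa),
        pair_eq_of_perm2 (perm2_of_mem ha2 ha2' haa)]
  · by_cases hbb : b = b'
    · obtain ⟨y, hy⟩ := other_of_mem hb1
      obtain ⟨y', hy'⟩ := other_of_mem hb2
      have key : y = y' := by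
        by_cases haa : a = a'
        · have hcc : c ≠ c' := fun h => hpq ⟨haa, hbb, h⟩
          have e1 : L a y c = L a b c' :=
            flipJK h1 h2 h3 h4 h5 h6 ha1 (perm2_swap hy) (perm2_of_mem hc1 hc1' hcc)
          have e2 : L a y' c = L a b c' :=
            flipJK h1' h2' h3' h4' h5' h6' ha2 (perm2_swap hy') (perm2_of_mem hc2 hc2' hcc)
          exact (hL.1 a c).injective (e1.trans e2.symm)
        · have e1 : L a y c = L a' b c :=
            flipIJ h1 h2 h3 h4 h5 h6 (perm2_of_mem ha1 ha1' haa) (perm2_swap hy) hc1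
          have e2 : L a y' c = L a' b c :=
            flipIJ h1' h2' h3' h4' h5' h6' (perm2_of_mem ha2 ha2' haa) (perm2_swap hy') hc2
          exact (hL.1 a c).injective (e1.trans e2.symm)
      rw [pair_eq_of_perm2 hy, pair_eq_of_perm2 hy', key]
    · rw [pair_eq_of_perm2 (perm2_of_mem hb1 hb1' hbb),
        pair_eq_of_perm2 (perm2_of_mem hb2 hb2' hbb)]
  · by_cases hcc : c = c'
    · obtain ⟨z, hz⟩ := other_of_mem hc1
      obtain ⟨z', hz'⟩ := other_of_mem hc2
      have key : z = z' := by
        by_cases haa : a = a'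
        · have hbb : b ≠ b' := fun h => hpq ⟨haa, h, hcc⟩
          have e1 : L a b z = L a b' c :=
            flipJK h1 h2 h3 h4 h5 h6 ha1 (perm2_of_mem hb1 hb1' hbb) (perm2_swap hz)
          have e2 : L a b z' = L a b' c :=
            flipJK h1' h2' h3' h4' h5' h6' ha2 (perm2_of_mem hb2 hb2' hbb) (perm2_swap hz')
          exact (hL.2.2 a b).injective (e1.trans e2.symm)
        · have e1 : L a b z = L a' b c :=
            flipIK h1 h2 h3 h4 h5 h6 (perm2_of_mem ha1 ha1' haa) hb1 (perm2_swap hz)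
          have e2 : L a b z' = L a' b c :=
            flipIK h1' h2' h3' h4' h5' h6' (perm2_of_mem ha2 ha2' haa) hb2 (perm2_swap hz')
          exact (hL.2.2 a b).injective (e1.trans e2.symm)
      rw [pair_eq_of_perm2 hz, pair_eq_of_perm2 hz', key]
    · rw [pair_eq_of_perm2 (perm2_of_mem hc1 hc1' hcc),
        pair_eq_of_perm2 (perm2_of_mem hc2 hc2' hcc)]

/-- In any Latin cube, the intersection of two subcubes of order 2 is either empty,
a single cell, or all eight cells (i.e. the subcubes coincide). -/
theorem subcube_intersection {n : ℕ} (L : Fin n → Fin n → Fin n → Fin n)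
    (hL : IsLatinCube L) (S₁ S₂ : Finset (Fin n × Fin n × Fin n))
    (h₁ : IsSubcube L S₁) (h₂ : IsSubcube L S₂) :
    S₁ ∩ S₂ = ∅ ∨ (S₁ ∩ S₂).card = 1 ∨ S₁ = S₂ := by
  by_cases hne : S₁ ∩ S₂ = ∅
  · exact Or.inl hne
  rcases eq_or_lt_of_le (Nat.one_le_iff_ne_zero.mpr
      (fun h => hne (Finset.card_eq_zero.mp h))) with h|h
  · exact Or.inr (Or.inl h.symm)
  refine Or.inr (Or.inr ?_)
  obtain ⟨p, hp, q, hq, hpqne⟩ := Finset.one_lt_card.mp h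
  obtain ⟨i₁, i₂, j₁, j₂, k₁, k₂, hi, hj, hk, h1, h2, h3, h4, h5, h6, hS₁⟩ := h₁
  obtain ⟨i₁', i₂', j₁', j₂', k₁', k₂', hi', hj', hk', h1', h2', h3', h4', h5', h6', hS₂⟩ := h₂
  obtain ⟨a, b, c⟩ := p
  obtain ⟨a', b', c'⟩ := q
  rw [Finset.mem_inter] at hp hq
  rw [hS₁, hS₂] at hp hq ⊢
  simp only [Finset.mem_insert, Finset.mem_singleton, Prod.mk.injEq] at hp hq
  have hpq : ¬(a = a' ∧ b = b' ∧ c = c') := by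
    rintro ⟨rfl, rfl, rfl⟩; exact hpqne rfl
  obtain ⟨ha1, hb1, hc1⟩ := coords_of_mem hp.1
  obtain ⟨ha2, hb2, hc2⟩ := coords_of_mem hp.2
  obtain ⟨ha1', hb1', hc1'⟩ := coords_of_mem hq.1
  obtain ⟨ha2', hb2', hc2'⟩ := coords_of_mem hq.2
  obtain ⟨eI, eJ, eK⟩ := pairs_eq hL h1 h2 h3 h4 h5 h6 h1' h2' h3' h4' h5' h6'
    hpq ha1 hb1 hc1 ha1' hb1' hc1' ha2 hb2 hc2 ha2' hb2' hc2'
  rw [subcube_as_product, subcube_as_product, eI, eJ, eK]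
end

section
/- If a subcube of order 2 in the starting Latin cube contains the cells (i1,j1,k1), (i1,j2,k1), (i2,j1,k1), (i2,j2,k1), (i1,j1,k2), (i1,j2,k2), (i2,j1,k2), (i2,j2,k2), then the rows R_{i1,k1} and R_{i2,k2} lie in the same row block, as do the rows R_{i2,k1} and R_{i1,k2}. -/
/-- The starting Latin cube of order `2*t`. -/
def SLC (t : ℕ) (i j k : ℤ) : ℤ :=
  if (i ≤ t ∧ j ≤ t ∧ k ≤ t) ∨ ((t:ℤ) < i ∧ (t:ℤ) < k ∧ j ≤ t) then rmod t (j - i + k)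
  else if ((t:ℤ) < i ∧ (t:ℤ) < j ∧ k ≤ t) ∨ ((t:ℤ) < j ∧ (t:ℤ) < k ∧ i ≤ t) then rmod t (i - j + k)
  else if (i ≤ t ∧ k ≤ t ∧ (t:ℤ) < j) ∨ ((t:ℤ) < i ∧ (t:ℤ) < j ∧ (t:ℤ) < k) then rmod t (j - i + k) + t
  else rmod t (i - j + k) + t

/-- The eight cells spanned by `(i1,j1,k1)` and `(i2,j2,k2)` form a subcube of order 2
of the starting Latin cube of order `2*t`. -/
abbrev SubC (t : ℕ) (i1 j1 k1 i2 j2 k2 : ℤ) : Prop :=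
  i1 ≠ i2 ∧ j1 ≠ j2 ∧ k1 ≠ k2 ∧
  SLC t i1 j1 k1 = SLC t i2 j2 k1 ∧ SLC t i1 j1 k1 = SLC t i1 j2 k2 ∧
  SLC t i1 j1 k1 = SLC t i2 j1 k2 ∧
  SLC t i1 j2 k1 = SLC t i2 j1 k1 ∧ SLC t i1 j2 k1 = SLC t i1 j1 k2 ∧
  SLC t i1 j2 k1 = SLC t i2 j2 k2
lemma rmod_range (t : ℕ) (ht : 1 ≤ t) (a : ℤ) : 1 ≤ rmod t a ∧ rmod t a ≤ t := by
  unfold rmod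
  have h0 : (0:ℤ) < t := by exact_mod_cast ht
  have h1 := Int.emod_nonneg (a - 1) (by positivity : (t:ℤ) ≠ 0)
  have h2 := Int.emod_lt_of_pos (a - 1) h0
  constructor <;> linarith

lemma rmod_eq_iff_s18 (t : ℕ) (a b : ℤ) : rmod t a = rmod t b ↔ (t:ℤ) ∣ a - b := by
  unfold rmod
  rw [add_left_inj, Int.emod_eq_emod_iff_emod_sub_eq_zero,
    show a - 1 - (b - 1) = a - b from by ring, ← Int.dvd_iff_emod_eq_zero]

set_option maxHeartbeats 1000000 in
lemma SLC_form (t : ℕ) (i x k : ℤ) :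
    SLC t i x k =
      (if ((x ≤ (t:ℤ)) ↔ ((i ≤ (t:ℤ)) ↔ (k ≤ (t:ℤ)))) then 0 else (t:ℤ)) +
      rmod t (if ((i ≤ (t:ℤ)) ↔ (k ≤ (t:ℤ))) then x - i + k else i - x + k) := by
  unfold SLC
  simp only [← not_le]
  split_ifs <;> first | ring1 | tauto

set_option maxHeartbeats 1000000 in
lemma SLC_eq_iff (t : ℕ) (ht : 1 ≤ t) (i x k i' x' k' : ℤ) :
    SLC t i x k = SLC t i' x' k' ↔
      ((t:ℤ) ∣ (if ((i ≤ (t:ℤ)) ↔ (k ≤ (t:ℤ))) then x - i + k else i - x + k) -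
        (if ((i' ≤ (t:ℤ)) ↔ (k' ≤ (t:ℤ))) then x' - i' + k' else i' - x' + k')) ∧
      (((x ≤ (t:ℤ)) ↔ ((i ≤ (t:ℤ)) ↔ (k ≤ (t:ℤ)))) ↔
        ((x' ≤ (t:ℤ)) ↔ ((i' ≤ (t:ℤ)) ↔ (k' ≤ (t:ℤ))))) := by
  rw [SLC_form, SLC_form]
  set A := (if ((i ≤ (t:ℤ)) ↔ (k ≤ (t:ℤ))) then x - i + k else i - x + k) with hA
  set B := (if ((i' ≤ (t:ℤ)) ↔ (k' ≤ (t:ℤ))) then x' - i' + k' else i' - x' + k') with hB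
  obtain ⟨hr1, hr2⟩ := rmod_range t ht A
  obtain ⟨hr1', hr2'⟩ := rmod_range t ht B
  by_cases hP : ((x ≤ (t:ℤ)) ↔ ((i ≤ (t:ℤ)) ↔ (k ≤ (t:ℤ)))) <;>
    by_cases hQ : ((x' ≤ (t:ℤ)) ↔ ((i' ≤ (t:ℤ)) ↔ (k' ≤ (t:ℤ))))
  · rw [if_pos hP, if_pos hQ, zero_add, zero_add, rmod_eq_iff_s18]
    tauto
  · rw [if_pos hP, if_neg hQ, zero_add]
    constructor
    · intro h; exfalso; linarith
    · rintro ⟨-, h⟩; exact absurd (h.mp hP) hQ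
  · rw [if_neg hP, if_pos hQ, zero_add]
    constructor
    · intro h; exfalso; linarith
    · rintro ⟨-, h⟩; exact absurd (h.mpr hQ) hP
  · rw [if_neg hP, if_neg hQ, add_right_inj, rmod_eq_iff_s18]
    tauto

lemma iff_trick (A B C D E : Prop) (h : (E ↔ (A ↔ B)) ↔ (E ↔ (C ↔ D))) :
    (A ↔ B) ↔ (C ↔ D) := by tauto

lemma xor_swap (A B C D : Prop) (h : (A ↔ B) ↔ (C ↔ D)) : (C ↔ B) ↔ (A ↔ D) := by tauto

set_option maxHeartbeats 2000000 in
/-- If a subcube of order 2 in the starting Latin cube of order `2t` is spanned by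
`(i₁,j₁,k₁)` and `(i₂,j₂,k₂)`, then the rows `R_{i₁,k₁}` and `R_{i₂,k₂}` lie in the
same row block, as do the rows `R_{i₂,k₁}` and `R_{i₁,k₂}`. -/
theorem subcube_rows_same_row_block (t : ℕ) (ht : 1 ≤ t)
    (i₁ j₁ k₁ i₂ j₂ k₂ : ℤ)
    (hi₁ : i₁ ∈ Finset.Icc (1:ℤ) (2*t)) (hj₁ : j₁ ∈ Finset.Icc (1:ℤ) (2*t))
    (hk₁ : k₁ ∈ Finset.Icc (1:ℤ) (2*t)) (hi₂ : i₂ ∈ Finset.Icc (1:ℤ) (2*t))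
    (hj₂ : j₂ ∈ Finset.Icc (1:ℤ) (2*t)) (hk₂ : k₂ ∈ Finset.Icc (1:ℤ) (2*t))
    (hsub : SubC t i₁ j₁ k₁ i₂ j₂ k₂) :
    (∀ x ∈ Finset.Icc (1:ℤ) (2*t), SLC t i₁ x k₁ = SLC t i₂ x k₂) ∧
    (∀ x ∈ Finset.Icc (1:ℤ) (2*t), SLC t i₂ x k₁ = SLC t i₁ x k₂) := by
  obtain ⟨-, -, -, h1, h2, h3, h4, h5, h6⟩ := hsub
  rw [SLC_eq_iff t ht] at h1 h2 h3 h4 h5 h6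
  obtain ⟨d1, s1⟩ := h1
  obtain ⟨d2, s2⟩ := h2
  obtain ⟨d3, s3⟩ := h3
  obtain ⟨d4, s4⟩ := h4
  obtain ⟨d5, s5⟩ := h5
  obtain ⟨d6, s6⟩ := h6
  have hee : ((i₁ ≤ (t:ℤ)) ↔ (k₁ ≤ (t:ℤ))) ↔ ((i₂ ≤ (t:ℤ)) ↔ (k₂ ≤ (t:ℤ))) :=
    iff_trick _ _ _ _ _ s3
  have hff : ((i₂ ≤ (t:ℤ)) ↔ (k₁ ≤ (t:ℤ))) ↔ ((i₁ ≤ (t:ℤ)) ↔ (k₂ ≤ (t:ℤ))) :=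
    xor_swap _ _ _ _ hee
  constructor
  · intro x _
    rw [SLC_eq_iff t ht]
    refine ⟨?_, iff_congr Iff.rfl hee⟩
    by_cases he : ((i₁ ≤ (t:ℤ)) ↔ (k₁ ≤ (t:ℤ)))
    · have he2 := hee.mp he
      rw [if_pos he, if_pos he2]
      rw [if_pos he, if_pos he2] at d3
      have : x - i₁ + k₁ - (x - i₂ + k₂) = j₁ - i₁ + k₁ - (j₁ - i₂ + k₂) := by ring
      rw [this]; exact d3
    · have he2 := fun h => he (hee.mpr h)
      rw [if_neg he, if_neg he2]
      rw [if_neg he, if_neg he2] at d3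
      have : i₁ - x + k₁ - (i₂ - x + k₂) = i₁ - j₁ + k₁ - (i₂ - j₁ + k₂) := by ring
      rw [this]; exact d3
  · intro x _
    rw [SLC_eq_iff t ht]
    refine ⟨?_, iff_congr Iff.rfl hff⟩
    by_cases hf : ((i₂ ≤ (t:ℤ)) ↔ (k₁ ≤ (t:ℤ))) <;>
      by_cases he : ((i₁ ≤ (t:ℤ)) ↔ (k₁ ≤ (t:ℤ)))
    · -- f true, e true : use d2 - d1
      have hf2 := hff.mp hf
      have he2 := hee.mp he
      rw [if_pos hf, if_pos hf2]
      rw [if_pos he, if_pos hf] at d1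
      rw [if_pos he, if_pos hf2] at d2
      have h := dvd_sub d2 d1
      have : x - i₂ + k₁ - (x - i₁ + k₂) =
          (j₁ - i₁ + k₁ - (j₂ - i₁ + k₂)) - (j₁ - i₁ + k₁ - (j₂ - i₂ + k₁)) := by ring
      rw [this]; exact h
    · -- f true, e false : use d6
      have hf2 := hff.mp hf
      have he2 := fun h => he (hee.mpr h)
      rw [if_pos hf, if_pos hf2]
      rw [if_neg he, if_neg he2] at d6
      have : x - i₂ + k₁ - (x - i₁ + k₂) =
          (i₁ - j₂ + k₁ - (i₂ - j₂ + k₂)) := by ring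
      rw [this]; exact d6
    · -- f false, e true : use d2 - d1
      have hf2 := fun h => hf (hff.mpr h)
      rw [if_neg hf, if_neg hf2]
      rw [if_pos he, if_neg hf] at d1
      rw [if_pos he, if_neg hf2] at d2
      have h := dvd_sub d2 d1
      have : i₂ - x + k₁ - (i₁ - x + k₂) =
          (j₁ - i₁ + k₁ - (i₁ - j₂ + k₂)) - (j₁ - i₁ + k₁ - (i₂ - j₂ + k₁)) := by ring
      rw [this]; exact h
    · -- f false, e false : use d2 - d1
      have hf2 := fun h => hf (hff.mpr h)
      rw [if_neg hf, if_neg hf2]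
      rw [if_neg he, if_neg hf] at d1
      rw [if_neg he, if_neg hf2] at d2
      have h := dvd_sub d2 d1
      have : i₂ - x + k₁ - (i₁ - x + k₂) =
          (i₁ - j₁ + k₁ - (i₁ - j₂ + k₂)) - (i₁ - j₁ + k₁ - (i₂ - j₂ + k₁)) := by ring
      rw [this]; exact h
end
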